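/- Let ι be a nonempty finite type, ε > 0, λ : ι → ℝ, and let B : ι → ι → ι → ℝ satisfy B k l n = −(B l k n) for all k, l, n ∈ ι and B k l k = 0 for all k, l ∈ ι. Let μ be the product measure on ι → ℝ whose coordinate i is distributed as gaussianReal 0 (ε/2) for every i ∈ ι, and define (Lh)(x) := ∑_{i∈ι} λ(i)·( −x_i·∂_i h(x) + (ε/2)·∂_i² h(x) ) − ∑_{k,l,n∈ι} B k l n · x_l · x_n · ∂_k h(x). Then for every twice continuously differentiable g : (ι → ℝ) → ℝ that is bounded together with all its first- and second-order partial derivatives, one has ∫ (Lg) dμ = 0. -/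

import Mathlib

open MeasureTheory ProbabilityTheory Real Filter Set
open scoped NNReal ENNReal

set_option maxHeartbeats 1000000

/-- Partial derivative in the `i`-th coordinate direction: the derivative at `t = 0` of
`t ↦ h (x + t eᵢ)`. -/
noncomputable def pderiv' {ι : Type*} [DecidableEq ι] (i : ι)
    (h : (ι → ℝ) → ℝ) (x : ι → ℝ) : ℝ :=
  deriv (fun t : ℝ => h (x + t • (Pi.single i 1 : ι → ℝ))) 0

/-- The generator of the Galerkin approximation of the stochastic SQG equation:
`(Lh)(x) = ∑ᵢ λᵢ (−xᵢ ∂ᵢh + (ε/2) ∂ᵢ²h) − ∑_{k,l,n} B k l n · x_l · x_n · ∂_k h`. -/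
noncomputable def sqgGen {ι : Type*} [DecidableEq ι] [Fintype ι] (ε : ℝ)
    (lam : ι → ℝ) (B : ι → ι → ι → ℝ) (h : (ι → ℝ) → ℝ) (x : ι → ℝ) : ℝ :=
  (∑ i, lam i * (-(x i) * pderiv' i h x + (ε / 2) * pderiv' i (pderiv' i h) x))
    - ∑ k, ∑ l, ∑ n, B k l n * x l * x n * pderiv' k h x

section A
variable {ι : Type*} [DecidableEq ι] [Fintype ι]

lemma hasDerivAt_line {h : (ι → ℝ) → ℝ} (hh : Differentiable ℝ h) (i : ι) (c : ι → ℝ) (t : ℝ) :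
    HasDerivAt (fun s : ℝ => h (c + s • (Pi.single i 1 : ι → ℝ)))
      (fderiv ℝ h (c + t • (Pi.single i 1 : ι → ℝ)) (Pi.single i 1)) t := by
  have hl : HasDerivAt (fun s : ℝ => c + s • (Pi.single i 1 : ι → ℝ)) (Pi.single i 1) t := by
    simpa using ((hasDerivAt_id t).smul_const (Pi.single i 1 : ι → ℝ)).const_add c
  exact ((hh _).hasFDerivAt.comp_hasDerivAt t hl)

lemma pderiv'_eq {h : (ι → ℝ) → ℝ} (hh : Differentiable ℝ h) (i : ι) :
    pderiv' i h = fun x => fderiv ℝ h x (Pi.single i 1) := by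
  funext x
  have := (hasDerivAt_line hh i x 0).deriv
  simpa [pderiv'] using this
end A

section B
variable {V : ℝ≥0}

lemma integral_gaussian_eq (hV : V ≠ 0) (f : ℝ → ℝ) :
    ∫ t, f t ∂(gaussianReal 0 V) = ∫ t, f t * gaussianPDFReal 0 V t := by
  rw [gaussianReal_of_var_ne_zero 0 hV]
  have hm : Measurable fun t => (gaussianPDFReal 0 V t).toNNReal :=
    (measurable_gaussianPDFReal 0 V).real_toNNReal
  have h : (gaussianPDF 0 V) = fun t => (((gaussianPDFReal 0 V t).toNNReal : ℝ≥0) : ℝ≥0∞) := by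
    funext t
    simp [gaussianPDF, ENNReal.ofReal]
  rw [h, integral_withDensity_eq_integral_smul hm]
  congr 1
  funext t
  simp [NNReal.smul_def, Real.coe_toNNReal _ (gaussianPDFReal_nonneg 0 V t), mul_comm]

lemma integrable_abs_pow_mul_exp {b : ℝ} (hb : 0 < b) (n : ℕ) :
    Integrable fun t : ℝ => |t| ^ n * Real.exp (-b * t ^ 2) := by
  have h := (integrable_rpow_mul_exp_neg_mul_sq hb (s := (n : ℝ)) (by exact lt_of_lt_of_le (by norm_num) (Nat.cast_nonneg n))).abs
  refine h.congr ?_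
  filter_upwards with t
  rw [Real.rpow_natCast, abs_mul, abs_pow, abs_of_nonneg (Real.exp_pos _).le]

lemma gaussianPDFReal_eq (V : ℝ≥0) (t : ℝ) :
    gaussianPDFReal 0 V t = (Real.sqrt (2 * π * V))⁻¹ * Real.exp (-(2 * (V:ℝ))⁻¹ * t ^ 2) := by
  rw [gaussianPDFReal]
  congr 1
  rw [sub_zero]
  congr 1
  ring

lemma integrable_abs_pow_mul_pdf (hV : 0 < (V : ℝ)) (n : ℕ) :
    Integrable fun t : ℝ => |t| ^ n * gaussianPDFReal 0 V t := by
  have hb : 0 < (2 * (V:ℝ))⁻¹ := by positivity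
  have h := (integrable_abs_pow_mul_exp hb n).const_mul (Real.sqrt (2 * π * (V:ℝ)))⁻¹
  refine h.congr ?_
  filter_upwards with t
  rw [gaussianPDFReal_eq]
  push_cast
  ring

lemma integrable_abs_pow_gaussian (hV : 0 < (V : ℝ)) (n : ℕ) :
    Integrable (fun t : ℝ => |t| ^ n) (gaussianReal 0 V) := by
  have hV' : V ≠ 0 := by exact_mod_cast hV.ne'
  rw [gaussianReal_of_var_ne_zero 0 hV']
  rw [integrable_withDensity_iff (measurable_gaussianPDF 0 V)
    (Filter.Eventually.of_forall fun t => ENNReal.ofReal_lt_top)]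
  refine (integrable_abs_pow_mul_pdf hV n).congr ?_
  filter_upwards with t
  rw [gaussianPDF, ENNReal.toReal_ofReal (gaussianPDFReal_nonneg 0 V t)]

lemma hasDerivAt_gaussianPDFReal (hV : 0 < (V : ℝ)) (t : ℝ) :
    HasDerivAt (gaussianPDFReal 0 V) (-(t / V) * gaussianPDFReal 0 V t) t := by
  have h1 : HasDerivAt (fun t : ℝ => -(2 * (V:ℝ))⁻¹ * t ^ 2) (-(t / V)) t := by
    have h := (hasDerivAt_pow 2 t).const_mul (-(2 * (V:ℝ))⁻¹)
    refine h.congr_deriv ?_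
    field_simp
    ring
  have h2 := (h1.exp).const_mul (Real.sqrt (2 * π * (V:ℝ)))⁻¹
  have h3 : (fun u : ℝ => (Real.sqrt (2 * π * (V:ℝ)))⁻¹ * Real.exp (-(2 * (V:ℝ))⁻¹ * u ^ 2))
      = gaussianPDFReal 0 V := by
    funext u; rw [gaussianPDFReal_eq]
  rw [h3] at h2
  refine h2.congr_deriv ?_
  rw [gaussianPDFReal_eq]
  push_cast
  ring

lemma tendsto_pdf_infty (hV : 0 < (V : ℝ)) :
    Tendsto (gaussianPDFReal 0 V) atTop (nhds 0) ∧
    Tendsto (gaussianPDFReal 0 V) atBot (nhds 0) := by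
  have key : ∀ l : Filter ℝ, Tendsto (fun t : ℝ => t ^ 2) l atTop →
      Tendsto (gaussianPDFReal 0 V) l (nhds 0) := by
    intro l hl
    have hc : -(2 * (V:ℝ))⁻¹ < 0 := by
      have : 0 < (2 * (V:ℝ))⁻¹ := by positivity
      linarith
    have h1 : Tendsto (fun t : ℝ => -(2 * (V:ℝ))⁻¹ * t ^ 2) l atBot :=
      (tendsto_const_mul_atBot_of_neg hc).mpr hl
    have h2 : Tendsto (fun t : ℝ => Real.exp (-(2 * (V:ℝ))⁻¹ * t ^ 2)) l (nhds 0) :=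
      Real.tendsto_exp_atBot.comp h1
    have h3 := h2.const_mul (Real.sqrt (2 * π * (V:ℝ)))⁻¹
    rw [mul_zero] at h3
    refine h3.congr fun t => ?_
    rw [gaussianPDFReal_eq]
  have hsq : Tendsto (fun t : ℝ => t ^ 2) atTop atTop :=
    tendsto_pow_atTop (by norm_num)
  constructor
  · exact key _ hsq
  · refine key _ ?_
    have h := hsq.comp tendsto_abs_atBot_atTop
    refine h.congr fun t => ?_
    simp [Function.comp, sq_abs]
end B

lemma ibp1 {V : ℝ≥0} (hV : 0 < (V : ℝ)) (f f' : ℝ → ℝ)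
    (hd : ∀ t, HasDerivAt f (f' t) t) (hc' : Continuous f')
    (M M' : ℝ) (hM : ∀ t, |f t| ≤ M) (hM' : ∀ t, |f' t| ≤ M') :
    (V : ℝ) * ∫ t, f' t ∂(gaussianReal 0 V) = ∫ t, t * f t ∂(gaussianReal 0 V) := by
  have hV' : V ≠ 0 := by exact_mod_cast hV.ne'
  set p : ℝ → ℝ := gaussianPDFReal 0 V with hp
  have hp_nonneg : ∀ t, 0 ≤ p t := gaussianPDFReal_nonneg 0 V
  have hf_cont : Continuous f :=
    Differentiable.continuous (fun t => (hd t).differentiableAt)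
  have hp_cont : Continuous p :=
    Differentiable.continuous (fun t => (hasDerivAt_gaussianPDFReal hV t).differentiableAt)
  have I1 : Integrable (fun t => f' t * p t) := by
    refine Integrable.mono' ((integrable_gaussianPDFReal 0 V).const_mul M')
      (hc'.mul hp_cont).aestronglyMeasurable ?_
    filter_upwards with t
    rw [norm_mul, Real.norm_eq_abs, Real.norm_eq_abs, abs_of_nonneg (hp_nonneg t)]
    exact mul_le_mul_of_nonneg_right (hM' t) (hp_nonneg t)
  have I2 : Integrable (fun t => t * f t * p t) := by
    refine Integrable.mono' ((integrable_abs_pow_mul_pdf hV 1).const_mul M)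
      (((continuous_id.mul hf_cont).mul hp_cont)).aestronglyMeasurable ?_
    filter_upwards with t
    rw [norm_mul, norm_mul, Real.norm_eq_abs, Real.norm_eq_abs, Real.norm_eq_abs,
      abs_of_nonneg (hp_nonneg t), pow_one]
    calc |t| * |f t| * p t ≤ |t| * M * p t := by
          have := mul_le_mul_of_nonneg_left (hM t) (abs_nonneg t)
          exact mul_le_mul_of_nonneg_right this (hp_nonneg t)
      _ = M * (|t| * p t) := by ring
  have I2' : Integrable (fun t => t / V * (f t * p t)) := by
    refine (I2.const_mul (V : ℝ)⁻¹).congr ?_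
    filter_upwards with t
    ring
  set G : ℝ → ℝ := fun t => f' t * p t - t / V * (f t * p t) with hG
  have IG : Integrable G := I1.sub I2'
  have hF : ∀ t, HasDerivAt (fun t => f t * p t) (G t) t := by
    intro t
    have h := (hd t).mul (hasDerivAt_gaussianPDFReal hV t)
    refine h.congr_deriv ?_
    simp only [hG, hp]
    ring
  have htop : Tendsto (fun t => f t * p t) atTop (nhds 0) := by
    have h := ((tendsto_pdf_infty hV).1.const_mul M)
    rw [mul_zero] at h
    refine squeeze_zero_norm (fun t => ?_) h
    rw [norm_mul, Real.norm_eq_abs, Real.norm_eq_abs, abs_of_nonneg (hp_nonneg t)]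
    exact mul_le_mul_of_nonneg_right (hM t) (hp_nonneg t)
  have hbot : Tendsto (fun t => f t * p t) atBot (nhds 0) := by
    have h := ((tendsto_pdf_infty hV).2.const_mul M)
    rw [mul_zero] at h
    refine squeeze_zero_norm (fun t => ?_) h
    rw [norm_mul, Real.norm_eq_abs, Real.norm_eq_abs, abs_of_nonneg (hp_nonneg t)]
    exact mul_le_mul_of_nonneg_right (hM t) (hp_nonneg t)
  have hIoi : ∫ t in Ioi (0:ℝ), G t = 0 - f 0 * p 0 :=
    integral_Ioi_of_hasDerivAt_of_tendsto' (fun x _ => hF x) IG.integrableOn htop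
  have hIic : ∫ t in Iic (0:ℝ), G t = f 0 * p 0 - 0 :=
    integral_Iic_of_hasDerivAt_of_tendsto' (fun x _ => hF x) IG.integrableOn hbot
  have hsplit : (∫ t in Iic (0:ℝ), G t) + ∫ t in Ioi (0:ℝ), G t = ∫ t, G t := by
    have := integral_add_compl (measurableSet_Iic (a := (0:ℝ))) IG
    rwa [compl_Iic] at this
  have hzero : ∫ t, G t = 0 := by
    rw [← hsplit, hIoi, hIic]
    ring
  have hsub : ∫ t, G t = (∫ t, f' t * p t) - ∫ t, t / V * (f t * p t) :=
    integral_sub I1 I2'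
  have hpull : ∫ t, t / V * (f t * p t) = (V : ℝ)⁻¹ * ∫ t, t * f t * p t := by
    rw [← integral_const_mul]
    congr 1
    funext t
    ring
  rw [integral_gaussian_eq hV' f', integral_gaussian_eq hV' (fun t => t * f t)]
  have : (∫ t, f' t * p t) = (V : ℝ)⁻¹ * ∫ t, t * f t * p t := by
    rw [hsub, hpull] at hzero
    linarith
  rw [this]
  field_simp
  rfl

section C
variable {ι : Type*} [DecidableEq ι] [Fintype ι] {V : ℝ≥0}

/-- marginal of the product measure -/
lemma map_eval_pi (j : ι) :
    Measure.map (fun x : ι → ℝ => x j) (Measure.pi fun _ : ι => gaussianReal 0 V)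
      = gaussianReal 0 V := by
  ext s hs
  rw [Measure.map_apply (measurable_pi_apply j) hs]
  have h : (fun x : ι → ℝ => x j) ⁻¹' s
      = Set.pi Set.univ (Function.update (fun _ : ι => (Set.univ : Set ℝ)) j s) := by
    ext x
    simp only [mem_preimage, Set.mem_univ_pi]
    constructor
    · intro hx k
      rcases eq_or_ne k j with rfl | hk
      · simpa using hx
      · simp [Function.update_apply, hk]
    · intro hx
      have := hx j
      simpa using this
  rw [h, Measure.pi_pi]
  have h2 : ∀ k, (gaussianReal 0 V) (Function.update (fun _ : ι => (Set.univ : Set ℝ)) j s k)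
      = Function.update (fun _ : ι => (1 : ℝ≥0∞)) j ((gaussianReal 0 V) s) k := by
    intro k
    rcases eq_or_ne k j with rfl | hk
    · simp
    · simp [Function.update_apply, hk]
  rw [Finset.prod_congr rfl (fun k _ => h2 k), Finset.prod_update_of_mem (Finset.mem_univ j)]
  simp

lemma integrable_coord_comp (f : ℝ → ℝ)
    (hint : Integrable f (gaussianReal 0 V)) (j : ι) :
    Integrable (fun x : ι → ℝ => f (x j)) (Measure.pi fun _ : ι => gaussianReal 0 V) := by
  have h := hint
  rw [← map_eval_pi (ι := ι) (V := V) j] at h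
  exact h.comp_measurable (measurable_pi_apply j)

/-- reconstruction map -/
noncomputable def recon (i : ι) (z : {j : ι // ¬ j = i} → ℝ) (t : ℝ) : ι → ℝ :=
  fun j => if h : j = i then t else z ⟨j, h⟩

omit [Fintype ι] in
lemma recon_eq_line (i : ι) (z : {j : ι // ¬ j = i} → ℝ) (t : ℝ) :
    recon i z t = recon i z 0 + t • (Pi.single i 1 : ι → ℝ) := by
  funext j
  by_cases h : j = i
  · subst h
    simp [recon]
  · simp [recon, h, Pi.single_apply]

omit [Fintype ι] in
lemma recon_apply_self (i : ι) (z : {j : ι // ¬ j = i} → ℝ) (t : ℝ) :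
    recon i z t i = t := by simp [recon]

omit [Fintype ι] in
lemma recon_apply_ne (i : ι) (z : {j : ι // ¬ j = i} → ℝ) (t : ℝ) {l : ι} (hl : ¬ l = i) :
    recon i z t l = z ⟨l, hl⟩ := by simp [recon, hl]

omit [Fintype ι] in
lemma recon_continuous (i : ι) (z : {j : ι // ¬ j = i} → ℝ) :
    Continuous fun t => recon i z t := by
  have : (fun t => recon i z t) = fun t => recon i z 0 + t • (Pi.single i 1 : ι → ℝ) := by
    funext t; exact recon_eq_line i z t
  rw [this]
  exact continuous_const.add (continuous_id.smul continuous_const)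

/-- Fubini with one distinguished coordinate, for the Gaussian product measure. -/
lemma integral_pi_split (i : ι) (F : (ι → ℝ) → ℝ) (hFc : Continuous F)
    (hF : Integrable F (Measure.pi fun _ : ι => gaussianReal 0 V)) :
    ∫ x, F x ∂(Measure.pi fun _ : ι => gaussianReal 0 V)
      = ∫ z : {j : ι // ¬ j = i} → ℝ, (∫ t : ℝ, F (recon i z t) ∂(gaussianReal 0 V))
          ∂(Measure.pi fun _ : {j : ι // ¬ j = i} => gaussianReal 0 V) := by
  set γ := gaussianReal 0 V with hγ
  set e := MeasurableEquiv.piEquivPiSubtypeProd (fun _ : ι => ℝ) (fun j => j = i) with he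
  have mp := measurePreserving_piEquivPiSubtypeProd (fun _ : ι => γ) (fun j => j = i)
  have h1 := (mp.integral_comp e.measurableEmbedding (fun y => F (e.symm y))).symm
  simp only [he, MeasurableEquiv.symm_apply_apply] at h1
  rw [← he] at h1
  rw [← h1, integral_prod_symm (fun y => F (e.symm y)) (((mp.symm e).integrable_comp_emb
    e.symm.measurableEmbedding).mpr hF)]
  refine integral_congr_ae (Filter.Eventually.of_forall fun z => ?_)
  dsimp only
  have hkey : ∀ a : {j : ι // j = i} → ℝ, e.symm (a, z) = recon i z (a ⟨i, rfl⟩) := by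
    intro a
    funext j
    by_cases h : j = i
    · subst h
      simp [he, recon, Equiv.piEquivPiSubtypeProd_symm_apply]
    · simp [he, recon, h, Equiv.piEquivPiSubtypeProd_symm_apply]
  have hfun : (fun a : {j : ι // j = i} → ℝ => F (e.symm (a, z)))
      = fun a => F (recon i z (a ⟨i, rfl⟩)) := funext fun a => congrArg F (hkey a)
  rw [hfun]
  have h4 := map_eval_pi (ι := {j : ι // j = i}) (V := V) (⟨i, rfl⟩ : {j : ι // j = i})
  rw [← hγ] at h4
  conv_rhs => rw [← h4, integral_map (measurable_pi_apply _).aemeasurable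
    (hFc.comp (recon_continuous i z)).aestronglyMeasurable]
  congr!
end C


/-- Infinitesimal invariance of the Gaussian measure `⊗ᵢ 𝒢(0, ε/2)` for the Galerkin
SQG dynamics: `∫ (Lg) dμ = 0`. -/
theorem stmt_14 (ι : Type*) [DecidableEq ι] [Fintype ι] [Nonempty ι]
    (ε : ℝ) (hε : 0 < ε) (lam : ι → ℝ) (B : ι → ι → ι → ℝ)
    (hB1 : ∀ k l n, B k l n = -(B l k n)) (hB2 : ∀ k l, B k l k = 0)
    (g : (ι → ℝ) → ℝ) (hg : ContDiff ℝ 2 g)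
    (hgb : ∃ M : ℝ, ∀ x, |g x| ≤ M)
    (hgb1 : ∀ i, ∃ M : ℝ, ∀ x, |pderiv' i g x| ≤ M)
    (hgb2 : ∀ i j, ∃ M : ℝ, ∀ x, |pderiv' i (pderiv' j g) x| ≤ M) :
    (∫ x, sqgGen ε lam B g x
        ∂(Measure.pi fun _ : ι => gaussianReal 0 (ε / 2).toNNReal)) = 0 := by
  classical
  obtain ⟨Mg, hMg⟩ := hgb
  choose M1 hM1 using hgb1
  choose M2 hM2 using hgb2
  set V : ℝ≥0 := (ε / 2).toNNReal with hVdef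
  have hVc : (V : ℝ) = ε / 2 := Real.coe_toNNReal _ (by positivity)
  have hVpos : 0 < (V : ℝ) := by rw [hVc]; positivity
  have hVne : V ≠ 0 := by exact_mod_cast hVpos.ne'
  -- regularity
  have hgd : Differentiable ℝ g := hg.differentiable (by norm_num)
  have hgc : Continuous g := hgd.continuous
  have hpd_eq : ∀ i : ι, pderiv' i g = fun x => fderiv ℝ g x (Pi.single i 1) :=
    fun i => pderiv'_eq hgd i
  have hpd1 : ∀ i : ι, ContDiff ℝ 1 (pderiv' i g) := by
    intro i
    rw [hpd_eq i]
    exact (hg.fderiv_right (by norm_num)).clm_apply contDiff_const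
  have hpd1d : ∀ i : ι, Differentiable ℝ (pderiv' i g) :=
    fun i => (hpd1 i).differentiable one_ne_zero
  have hpdc : ∀ i : ι, Continuous (pderiv' i g) := fun i => (hpd1 i).continuous
  have hpd2_eq : ∀ i j : ι,
      pderiv' i (pderiv' j g) = fun x => fderiv ℝ (pderiv' j g) x (Pi.single i 1) :=
    fun i j => pderiv'_eq (hpd1d j) i
  have hpd2c : ∀ i j : ι, Continuous (pderiv' i (pderiv' j g)) := by
    intro i j
    rw [hpd2_eq i j]
    exact (((hpd1 j).fderiv_right (m := 0) (by norm_num)).clm_apply contDiff_const).continuous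
  -- nonnegativity of bounds
  have hMg0 : 0 ≤ Mg := le_trans (abs_nonneg _) (hMg 0)
  have hM10 : ∀ i, 0 ≤ M1 i := fun i => le_trans (abs_nonneg _) (hM1 i 0)
  -- integrability
  have habs : ∀ (j : ι) (n : ℕ),
      Integrable (fun x : ι → ℝ => |x j| ^ n) (Measure.pi fun _ : ι => gaussianReal 0 V) :=
    fun j n => integrable_coord_comp _ (integrable_abs_pow_gaussian hVpos n) j
  haveI : IsProbabilityMeasure (Measure.pi fun _ : ι => gaussianReal 0 V) := by infer_instance
  have hbdd : ∀ F : (ι → ℝ) → ℝ, Continuous F → (∀ x, |F x| ≤ Mg) → True := fun _ _ _ => trivial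
  have J2 : ∀ i j : ι, Integrable (fun x => pderiv' i (pderiv' j g) x)
      (Measure.pi fun _ : ι => gaussianReal 0 V) := by
    intro i j
    refine (integrable_const (M2 i j)).mono' (hpd2c i j).aestronglyMeasurable ?_
    filter_upwards with x
    exact hM2 i j x
  have J1 : ∀ i : ι, Integrable (fun x => x i * pderiv' i g x)
      (Measure.pi fun _ : ι => gaussianReal 0 V) := by
    intro i
    refine ((habs i 1).const_mul (M1 i)).mono'
      (((continuous_apply i).mul (hpdc i)).aestronglyMeasurable) ?_
    filter_upwards with x
    rw [Real.norm_eq_abs, abs_mul, pow_one]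
    calc |x i| * |pderiv' i g x| ≤ |x i| * M1 i :=
          mul_le_mul_of_nonneg_left (hM1 i x) (abs_nonneg _)
      _ = M1 i * |x i| := mul_comm _ _
  have J3 : ∀ k l n : ι, Integrable (fun x => x l * x n * pderiv' k g x)
      (Measure.pi fun _ : ι => gaussianReal 0 V) := by
    intro k l n
    refine (((habs l 2).const_mul (M1 k / 2)).add
      ((habs n 2).const_mul (M1 k / 2))).mono'
      (((continuous_apply l).mul (continuous_apply n)).mul (hpdc k)).aestronglyMeasurable ?_
    filter_upwards with x
    rw [Real.norm_eq_abs, abs_mul, abs_mul]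
    have h1 : |x l| * |x n| ≤ (|x l| ^ 2 + |x n| ^ 2) / 2 := by
      nlinarith [sq_nonneg (|x l| - |x n|)]
    have h2 : |x l| * |x n| * |pderiv' k g x| ≤ |x l| * |x n| * M1 k :=
      mul_le_mul_of_nonneg_left (hM1 k x) (mul_nonneg (abs_nonneg _) (abs_nonneg _))
    calc |x l| * |x n| * |pderiv' k g x| ≤ |x l| * |x n| * M1 k := h2
      _ ≤ (|x l| ^ 2 + |x n| ^ 2) / 2 * M1 k :=
          mul_le_mul_of_nonneg_right h1 (hM10 k)
      _ = M1 k / 2 * |x l| ^ 2 + M1 k / 2 * |x n| ^ 2 := by ring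
  have J4 : ∀ k l n : ι, Integrable (fun x => x k * (x l * x n * g x))
      (Measure.pi fun _ : ι => gaussianReal 0 V) := by
    intro k l n
    refine ((((habs k 3).const_mul (Mg / 3)).add
      ((habs l 3).const_mul (Mg / 3))).add
      ((habs n 3).const_mul (Mg / 3))).mono'
      ((continuous_apply k).mul
        (((continuous_apply l).mul (continuous_apply n)).mul hgc)).aestronglyMeasurable ?_
    filter_upwards with x
    rw [Real.norm_eq_abs, abs_mul, abs_mul, abs_mul]
    have h1 : |x k| * (|x l| * |x n|) ≤ (|x k| ^ 3 + |x l| ^ 3 + |x n| ^ 3) / 3 := by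
      nlinarith [abs_nonneg (x k), abs_nonneg (x l), abs_nonneg (x n),
        mul_nonneg (add_nonneg (add_nonneg (abs_nonneg (x k)) (abs_nonneg (x l)))
          (abs_nonneg (x n))) (sq_nonneg (|x k| - |x l|)),
        mul_nonneg (add_nonneg (add_nonneg (abs_nonneg (x k)) (abs_nonneg (x l)))
          (abs_nonneg (x n))) (sq_nonneg (|x l| - |x n|)),
        mul_nonneg (add_nonneg (add_nonneg (abs_nonneg (x k)) (abs_nonneg (x l)))
          (abs_nonneg (x n))) (sq_nonneg (|x k| - |x n|))]
    have h2 : |x k| * (|x l| * |x n| * |g x|) ≤ |x k| * (|x l| * |x n|) * Mg := by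
      have := mul_le_mul_of_nonneg_left (hMg x)
        (mul_nonneg (mul_nonneg (abs_nonneg (x k)) (abs_nonneg (x l))) (abs_nonneg (x n)))
      calc |x k| * (|x l| * |x n| * |g x|) = |x k| * |x l| * |x n| * |g x| := by ring
        _ ≤ |x k| * |x l| * |x n| * Mg := this
        _ = |x k| * (|x l| * |x n|) * Mg := by ring
    calc |x k| * (|x l| * |x n| * |g x|) ≤ |x k| * (|x l| * |x n|) * Mg := h2
      _ ≤ (|x k| ^ 3 + |x l| ^ 3 + |x n| ^ 3) / 3 * Mg :=
          mul_le_mul_of_nonneg_right h1 hMg0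
      _ = Mg / 3 * |x k| ^ 3 + Mg / 3 * |x l| ^ 3 + Mg / 3 * |x n| ^ 3 := by ring
  -- identity I1
  have I1 : ∀ i : ι, ∫ x, x i * pderiv' i g x ∂(Measure.pi fun _ : ι => gaussianReal 0 V)
      = (V : ℝ) * ∫ x, pderiv' i (pderiv' i g) x
          ∂(Measure.pi fun _ : ι => gaussianReal 0 V) := by
    intro i
    rw [integral_pi_split i (fun x => x i * pderiv' i g x)
        ((continuous_apply i).mul (hpdc i)) (J1 i),
      integral_pi_split i (fun x => pderiv' i (pderiv' i g) x) (hpd2c i i) (J2 i i),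
      ← integral_const_mul]
    refine integral_congr_ae (Filter.Eventually.of_forall fun z => ?_)
    dsimp only
    have hder : ∀ t, HasDerivAt (fun t => pderiv' i g (recon i z t))
        (pderiv' i (pderiv' i g) (recon i z t)) t := by
      intro t
      have hfun : (fun s : ℝ => pderiv' i g (recon i z s))
          = fun s => pderiv' i g (recon i z 0 + s • (Pi.single i 1 : ι → ℝ)) := by
        funext s; rw [recon_eq_line i z s]
      rw [hfun, hpd2_eq i i, recon_eq_line i z t]
      exact hasDerivAt_line (hpd1d i) i (recon i z 0) t
    have key := ibp1 hVpos (fun t => pderiv' i g (recon i z t))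
      (fun t => pderiv' i (pderiv' i g) (recon i z t)) hder
      ((hpd2c i i).comp (recon_continuous i z))
      (M1 i) (M2 i i) (fun t => hM1 i _) (fun t => hM2 i i _)
    rw [key]
    refine integral_congr_ae (Filter.Eventually.of_forall fun t => ?_)
    dsimp only
    rw [recon_apply_self]
  -- identity I2
  have I2 : ∀ k l n : ι, ¬ l = k → ¬ n = k →
      (V : ℝ) * ∫ x, x l * x n * pderiv' k g x ∂(Measure.pi fun _ : ι => gaussianReal 0 V)
        = ∫ x, x k * (x l * x n * g x) ∂(Measure.pi fun _ : ι => gaussianReal 0 V) := by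
    intro k l n hlk hnk
    rw [integral_pi_split k (fun x => x l * x n * pderiv' k g x)
        (((continuous_apply l).mul (continuous_apply n)).mul (hpdc k)) (J3 k l n),
      integral_pi_split k (fun x => x k * (x l * x n * g x))
        ((continuous_apply k).mul (((continuous_apply l).mul (continuous_apply n)).mul hgc))
        (J4 k l n),
      ← integral_const_mul]
    refine integral_congr_ae (Filter.Eventually.of_forall fun z => ?_)
    dsimp only
    have hder : ∀ t, HasDerivAt (fun t => g (recon k z t)) (pderiv' k g (recon k z t)) t := by
      intro t
      have hfun : (fun s : ℝ => g (recon k z s))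
          = fun s => g (recon k z 0 + s • (Pi.single k 1 : ι → ℝ)) := by
        funext s; rw [recon_eq_line k z s]
      rw [hfun, hpd_eq k, recon_eq_line k z t]
      exact hasDerivAt_line hgd k (recon k z 0) t
    have key := ibp1 hVpos (fun t => g (recon k z t)) (fun t => pderiv' k g (recon k z t))
      hder ((hpdc k).comp (recon_continuous k z)) Mg (M1 k)
      (fun t => hMg _) (fun t => hM1 k _)
    calc (V : ℝ) * ∫ t, recon k z t l * recon k z t n * pderiv' k g (recon k z t)
          ∂(gaussianReal 0 V)
        = (V : ℝ) * ∫ t, (z ⟨l, hlk⟩ * z ⟨n, hnk⟩) * pderiv' k g (recon k z t)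
            ∂(gaussianReal 0 V) := by
          congr 1
          refine integral_congr_ae (Filter.Eventually.of_forall fun t => ?_)
          dsimp only
          rw [recon_apply_ne k z t hlk, recon_apply_ne k z t hnk]
      _ = (z ⟨l, hlk⟩ * z ⟨n, hnk⟩) *
            ((V : ℝ) * ∫ t, pderiv' k g (recon k z t) ∂(gaussianReal 0 V)) := by
          rw [integral_const_mul]; ring
      _ = (z ⟨l, hlk⟩ * z ⟨n, hnk⟩) * ∫ t, t * g (recon k z t) ∂(gaussianReal 0 V) := by
          rw [key]
      _ = ∫ t, recon k z t k * (recon k z t l * recon k z t n * g (recon k z t))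
            ∂(gaussianReal 0 V) := by
          rw [← integral_const_mul]
          refine integral_congr_ae (Filter.Eventually.of_forall fun t => ?_)
          dsimp only
          rw [recon_apply_self, recon_apply_ne k z t hlk, recon_apply_ne k z t hnk]
          ring
  -- assemble
  have hsq : ∀ x, sqgGen ε lam B g x
      = (∑ i, lam i * (-(x i) * pderiv' i g x + (ε / 2) * pderiv' i (pderiv' i g) x))
        - ∑ k, ∑ l, ∑ n, B k l n * x l * x n * pderiv' k g x := fun x => rfl
  have hai : ∀ i : ι, Integrable
      (fun x => lam i * (-(x i) * pderiv' i g x + (ε / 2) * pderiv' i (pderiv' i g) x))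
      (Measure.pi fun _ : ι => gaussianReal 0 V) := by
    intro i
    refine Integrable.const_mul ?_ (lam i)
    refine Integrable.add ?_ ((J2 i i).const_mul (ε / 2))
    refine ((J1 i).neg).congr (Filter.Eventually.of_forall fun x => ?_)
    simp only [Pi.neg_apply]
    ring
  have hsi : ∀ k l n : ι, Integrable
      (fun x => B k l n * x l * x n * pderiv' k g x)
      (Measure.pi fun _ : ι => gaussianReal 0 V) := by
    intro k l n
    refine ((J3 k l n).const_mul (B k l n)).congr (Filter.Eventually.of_forall fun x => ?_)
    ring
  have hA : Integrable
      (fun x => ∑ i, lam i * (-(x i) * pderiv' i g x + (ε / 2) * pderiv' i (pderiv' i g) x))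
      (Measure.pi fun _ : ι => gaussianReal 0 V) :=
    integrable_finset_sum _ (fun i _ => hai i)
  have hS : Integrable
      (fun x => ∑ k, ∑ l, ∑ n, B k l n * x l * x n * pderiv' k g x)
      (Measure.pi fun _ : ι => gaussianReal 0 V) :=
    integrable_finset_sum _ (fun k _ => integrable_finset_sum _ (fun l _ =>
      integrable_finset_sum _ (fun n _ => hsi k l n)))
  have hsplit : (∫ x, sqgGen ε lam B g x ∂(Measure.pi fun _ : ι => gaussianReal 0 V))
      = (∫ x, (∑ i, lam i * (-(x i) * pderiv' i g x + (ε / 2) * pderiv' i (pderiv' i g) x))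
          ∂(Measure.pi fun _ : ι => gaussianReal 0 V))
        - ∫ x, (∑ k, ∑ l, ∑ n, B k l n * x l * x n * pderiv' k g x)
          ∂(Measure.pi fun _ : ι => gaussianReal 0 V) := by
    rw [← integral_sub hA hS]
    rfl
  rw [hsplit]
  -- first part vanishes
  have hfirst : (∫ x, (∑ i, lam i * (-(x i) * pderiv' i g x
        + (ε / 2) * pderiv' i (pderiv' i g) x))
      ∂(Measure.pi fun _ : ι => gaussianReal 0 V)) = 0 := by
    rw [integral_finset_sum _ (fun i _ => hai i)]
    refine Finset.sum_eq_zero fun i _ => ?_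
    rw [integral_const_mul]
    have h1 : Integrable (fun x => -(x i) * pderiv' i g x)
        (Measure.pi fun _ : ι => gaussianReal 0 V) := by
      refine ((J1 i).neg).congr (Filter.Eventually.of_forall fun x => ?_)
      simp only [Pi.neg_apply]
      ring
    rw [integral_add h1 ((J2 i i).const_mul (ε / 2))]
    have h2 : (∫ x, -(x i) * pderiv' i g x ∂(Measure.pi fun _ : ι => gaussianReal 0 V))
        = - ∫ x, x i * pderiv' i g x ∂(Measure.pi fun _ : ι => gaussianReal 0 V) := by
      rw [← integral_neg]
      refine integral_congr_ae (Filter.Eventually.of_forall fun x => ?_)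
      simp only [Pi.neg_apply]
      ring
    rw [h2, integral_const_mul, I1 i, hVc]
    ring
  -- second part vanishes
  have hsecond : (∫ x, (∑ k, ∑ l, ∑ n, B k l n * x l * x n * pderiv' k g x)
      ∂(Measure.pi fun _ : ι => gaussianReal 0 V)) = 0 := by
    rw [integral_finset_sum _ (fun k _ => integrable_finset_sum _ (fun l _ =>
      integrable_finset_sum _ (fun n _ => hsi k l n)))]
    have hrw : ∀ k : ι, (∫ x, (∑ l, ∑ n, B k l n * x l * x n * pderiv' k g x)
        ∂(Measure.pi fun _ : ι => gaussianReal 0 V))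
        = ∑ l, ∑ n, B k l n *
            ∫ x, x l * x n * pderiv' k g x ∂(Measure.pi fun _ : ι => gaussianReal 0 V) := by
      intro k
      rw [integral_finset_sum _ (fun l _ => integrable_finset_sum _ (fun n _ => hsi k l n))]
      refine Finset.sum_congr rfl fun l _ => ?_
      rw [integral_finset_sum _ (fun n _ => hsi k l n)]
      refine Finset.sum_congr rfl fun n _ => ?_
      rw [← integral_const_mul]
      refine integral_congr_ae (Filter.Eventually.of_forall fun x => ?_)
      ring
    rw [Finset.sum_congr rfl fun k _ => hrw k]
    -- now pure algebra
    set I : ι → ι → ι → ℝ := fun k l n =>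
      ∫ x, x l * x n * pderiv' k g x ∂(Measure.pi fun _ : ι => gaussianReal 0 V) with hI
    set J : ι → ι → ι → ℝ := fun k l n =>
      ∫ x, x k * (x l * x n * g x) ∂(Measure.pi fun _ : ι => gaussianReal 0 V) with hJ
    have hBkk : ∀ k n, B k k n = 0 := by
      intro k n
      have := hB1 k k n
      linarith
    have hterm : ∀ k l n, B k l n * I k l n = (V : ℝ)⁻¹ * (B k l n * J k l n) := by
      intro k l n
      by_cases hlk : l = k
      · subst hlk
        rw [hBkk]
        ring
      · by_cases hnk : n = k
        · subst hnk
          rw [hB2]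
          ring
        · have := I2 k l n hlk hnk
          have hIJ : I k l n = (V : ℝ)⁻¹ * J k l n := by
            rw [hI, hJ]
            dsimp only
            field_simp
            have h' : (∫ x, x k * (x l * x n * g x) ∂(Measure.pi fun _ : ι => gaussianReal 0 V))
                = ∫ x, x k * x l * x n * g x ∂(Measure.pi fun _ : ι => gaussianReal 0 V) :=
              integral_congr_ae (Filter.Eventually.of_forall fun x =>
                (by ring : x k * (x l * x n * g x) = x k * x l * x n * g x))
            linarith [this, h']
          rw [hIJ]
          ring
    have hJsymm : ∀ k l n, J k l n = J l k n := by
      intro k l n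
      rw [hJ]
      dsimp only
      refine integral_congr_ae (Filter.Eventually.of_forall fun x => ?_)
      ring
    have hsum : (∑ k, ∑ l, ∑ n, B k l n * J k l n) = 0 := by
      set c : ι → ι → ℝ := fun k l => ∑ n, B k l n * J k l n with hc
      have hanti : ∀ k l, c l k = - c k l := by
        intro k l
        rw [hc]
        dsimp only
        rw [← Finset.sum_neg_distrib]
        refine Finset.sum_congr rfl fun n _ => ?_
        rw [hB1 l k n, hJsymm l k n]
        ring
      have h1 : (∑ k, ∑ l, c k l) = ∑ l, ∑ k, c k l := Finset.sum_comm
      have h2 : (∑ l, ∑ k, c k l) = ∑ k, ∑ l, c l k := rfl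
      have h3 : (∑ k, ∑ l, c l k) = - ∑ k, ∑ l, c k l := by
        rw [← Finset.sum_neg_distrib]
        refine Finset.sum_congr rfl fun k _ => ?_
        rw [← Finset.sum_neg_distrib]
        exact Finset.sum_congr rfl fun l _ => hanti k l
      have : (∑ k, ∑ l, c k l) = 0 := by
        have := h1.trans (h2.trans h3)
        linarith
      exact this
    calc (∑ k, ∑ l, ∑ n, B k l n * I k l n)
        = ∑ k, ∑ l, ∑ n, (V : ℝ)⁻¹ * (B k l n * J k l n) := by
          refine Finset.sum_congr rfl fun k _ => Finset.sum_congr rfl fun l _ =>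
            Finset.sum_congr rfl fun n _ => hterm k l n
      _ = (V : ℝ)⁻¹ * ∑ k, ∑ l, ∑ n, B k l n * J k l n := by
          rw [Finset.mul_sum]
          refine Finset.sum_congr rfl fun k _ => ?_
          rw [Finset.mul_sum]
          refine Finset.sum_congr rfl fun l _ => ?_
          rw [Finset.mul_sum]
      _ = 0 := by rw [hsum]; ring
  rw [hfirst, hsecond]
  ring
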